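/- Let G be an m×m real symmetric matrix. Then there exists a unique vector x ∈ ℝ^m such that, writing G[x] for the matrix obtained from G by replacing its diagonal entries with the entries of x, every diagonal entry of the matrix exponential exp(G[x]) equals 1; consequently exp(G[x]) is a correlation matrix (symmetric positive definite with unit diagonal). -/

import Mathlib

open Matrix NormedSpace
open scoped Nat

variable {m : ℕ}

-- real symmetric implies hermitian
lemma isSymm_isHermitian {A : Matrix (Fin m) (Fin m) ℝ} (hA : A.IsSymm) : A.IsHermitian := by
  rwa [Matrix.IsHermitian, Matrix.conjTranspose_eq_transpose_of_trivial]

-- spectral package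
lemma spectral_package {A : Matrix (Fin m) (Fin m) ℝ} (hA : A.IsHermitian) :
    ∃ U : Matrix (Fin m) (Fin m) ℝ,
      U * Uᵀ = 1 ∧ Uᵀ * U = 1 ∧
      A = U * Matrix.diagonal hA.eigenvalues * Uᵀ ∧
      exp A = U * Matrix.diagonal (fun i => Real.exp (hA.eigenvalues i)) * Uᵀ := by
  classical
  set U : Matrix (Fin m) (Fin m) ℝ := (Matrix.IsHermitian.eigenvectorUnitary hA : Matrix (Fin m) (Fin m) ℝ)
  have hstar : star U = Uᵀ := by
    simp [Matrix.star_eq_conjTranspose, Matrix.conjTranspose_eq_transpose_of_trivial]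
  have h1 : U * Uᵀ = 1 := by
    rw [← hstar]; exact (Matrix.mem_unitaryGroup_iff).mp (Matrix.IsHermitian.eigenvectorUnitary hA).2
  have h2 : Uᵀ * U = 1 := by
    rw [← hstar]; exact (Matrix.mem_unitaryGroup_iff').mp (Matrix.IsHermitian.eigenvectorUnitary hA).2
  have hspec : A = U * Matrix.diagonal hA.eigenvalues * Uᵀ := by
    have := hA.spectral_theorem
    rw [Unitary.conjStarAlgAut_apply] at this
    change A = U * _ * star U at this
    rw [hstar] at this
    simpa using this
  refine ⟨U, h1, h2, hspec, ?_⟩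
  have hUnit : IsUnit U := ⟨⟨U, Uᵀ, h1, h2⟩, rfl⟩
  have hinv : U⁻¹ = Uᵀ := Matrix.inv_eq_right_inv h1
  have hc := Matrix.exp_conj U (Matrix.diagonal hA.eigenvalues) hUnit
  rw [hinv] at hc
  rw [congrArg (exp) hspec, hc, Matrix.exp_diagonal]
  congr 1
  congr 1
  congr 1
  funext i
  rw [Pi.exp_def]
  simp [Real.exp_eq_exp_ℝ]

-- entries of U * diagonal d * Uᵀ
lemma conj_diag_apply (U : Matrix (Fin m) (Fin m) ℝ) (d : Fin m → ℝ) (i j : Fin m) :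
    (U * Matrix.diagonal d * Uᵀ) i j = ∑ k, d k * (U i k * U j k) := by
  simp [Matrix.mul_apply, Matrix.diagonal, Finset.sum_comm, mul_comm, mul_left_comm]

lemma row_sq_sum {U : Matrix (Fin m) (Fin m) ℝ} (h : U * Uᵀ = 1) (i : Fin m) :
    ∑ k, U i k * U i k = 1 := by
  have := congrFun (congrFun h i) i
  simpa [Matrix.mul_apply] using this

lemma trace_diag_mul (d : Fin m → ℝ) (M : Matrix (Fin m) (Fin m) ℝ) :
    Matrix.trace (Matrix.diagonal d * M) = ∑ i, d i * M i i := by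
  simp [Matrix.trace, Matrix.diag, Matrix.diagonal_mul]

lemma trace_conj_pair (U V : Matrix (Fin m) (Fin m) ℝ) (d e : Fin m → ℝ) :
    Matrix.trace ((U * Matrix.diagonal d * Uᵀ) * (V * Matrix.diagonal e * Vᵀ)) =
      ∑ i, ∑ j, d i * e j * ((Uᵀ * V) i j)^2 := by
  have h1 : (U * Matrix.diagonal d * Uᵀ) * (V * Matrix.diagonal e * Vᵀ)
      = U * (Matrix.diagonal d * (Uᵀ * (V * Matrix.diagonal e * Vᵀ))) := by
    simp [Matrix.mul_assoc]
  rw [h1, Matrix.trace_mul_comm]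
  have h2 : Matrix.diagonal d * (Uᵀ * (V * Matrix.diagonal e * Vᵀ)) * U
      = Matrix.diagonal d * ((Uᵀ * V) * Matrix.diagonal e * (Uᵀ * V)ᵀ) := by
    simp [Matrix.mul_assoc, Matrix.transpose_mul]
  rw [h2, trace_diag_mul]
  refine Finset.sum_congr rfl fun i _ => ?_
  rw [conj_diag_apply, Finset.mul_sum]
  exact Finset.sum_congr rfl fun j _ => by ring

lemma mul_pos_of_ne_zero {a : ℝ} (h : a ≠ 0) : 0 < a * a :=
  lt_of_le_of_ne (mul_self_nonneg a) (fun hc => h (by nlinarith [hc]))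

lemma exp_posDef {A : Matrix (Fin m) (Fin m) ℝ} (hA : A.IsSymm) : (exp A).PosDef := by
  classical
  have hhalf : ((2:ℝ)⁻¹ • A).IsSymm := by
    unfold Matrix.IsSymm at hA ⊢
    rw [Matrix.transpose_smul, hA]
  have hsum : (2:ℝ)⁻¹ • A + (2:ℝ)⁻¹ • A = A := by
    rw [← add_smul]; norm_num
  set B := exp ((2:ℝ)⁻¹ • A) with hBdef
  have hBsymm : Bᵀ = B := Matrix.IsSymm.exp hhalf
  have hB : exp A = B * B := by
    rw [← hsum, Matrix.exp_add_of_commute _ _ (Commute.refl _)]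
  have hUnit : IsUnit B := Matrix.isUnit_exp _
  have hInj : Function.Injective B.mulVec := Matrix.mulVec_injective_iff_isUnit.mpr hUnit
  refine Matrix.posDef_iff_dotProduct_mulVec.mpr ⟨isSymm_isHermitian (Matrix.IsSymm.exp hA), fun x hx => ?_⟩
  have hstar : star x = x := funext fun i => star_trivial _
  have hy : B *ᵥ x ≠ 0 := by
    intro h
    exact hx (hInj (h.trans (Matrix.mulVec_zero B).symm))
  have key : star x ⬝ᵥ (exp A) *ᵥ x = (B *ᵥ x) ⬝ᵥ (B *ᵥ x) := by
    rw [hstar, hB, ← Matrix.mulVec_mulVec, Matrix.dotProduct_mulVec]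
    congr 1
    conv_lhs => rw [← hBsymm]
    rw [Matrix.vecMul_transpose]
  rw [key]
  obtain ⟨i, hi⟩ := Function.ne_iff.mp hy
  refine Finset.sum_pos' (fun j _ => mul_self_nonneg _) ⟨i, Finset.mem_univ i, ?_⟩
  have : (B *ᵥ x) i ≠ 0 := by simpa using hi
  exact mul_pos_of_ne_zero this


lemma real_exp_diag_le {A : Matrix (Fin m) (Fin m) ℝ} (hA : A.IsSymm) (i : Fin m) :
    Real.exp (A i i) ≤ exp A i i := by
  classical
  obtain ⟨U, h1, h2, hspec, hexp⟩ := spectral_package (isSymm_isHermitian hA)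
  set lam := (isSymm_isHermitian hA).eigenvalues with hlam
  have hAii : A i i = ∑ k, (U i k * U i k) • lam k := by
    conv_lhs => rw [hspec]
    rw [conj_diag_apply]
    exact Finset.sum_congr rfl fun k _ => by simp [smul_eq_mul]; ring
  have hEii : exp A i i = ∑ k, (U i k * U i k) • Real.exp (lam k) := by
    conv_lhs => rw [hexp]
    rw [conj_diag_apply]
    exact Finset.sum_congr rfl fun k _ => by simp [smul_eq_mul]; ring
  rw [hAii, hEii]
  have := convexOn_exp.map_sum_le (t := Finset.univ) (w := fun k => U i k * U i k)
    (p := lam) (fun k _ => mul_self_nonneg _) (row_sq_sum h1 i) (fun k _ => Set.mem_univ _)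
  simpa [smul_eq_mul] using this

lemma expdiff_nonneg (a b : ℝ) : 0 ≤ (a - b) * (Real.exp a - Real.exp b) := by
  rcases le_total a b with h | h
  · nlinarith [Real.exp_le_exp.2 h]
  · exact mul_nonneg (sub_nonneg.2 h) (sub_nonneg.2 (Real.exp_le_exp.2 h))

lemma eq_of_expdiff_zero {a b : ℝ} (h : (a - b) * (Real.exp a - Real.exp b) = 0) : a = b := by
  rcases mul_eq_zero.mp h with h | h
  · linarith [sub_eq_zero.mp h]
  · exact Real.exp_injective (sub_eq_zero.mp h)

lemma eq_of_trace_pair_zero {A B : Matrix (Fin m) (Fin m) ℝ}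
    (hA : A.IsSymm) (hB : B.IsSymm)
    (h : Matrix.trace ((A - B) * (exp A - exp B)) = 0) : A = B := by
  classical
  obtain ⟨U, hU1, hU2, hAspec, hAexp⟩ := spectral_package (isSymm_isHermitian hA)
  obtain ⟨V, hV1, hV2, hBspec, hBexp⟩ := spectral_package (isSymm_isHermitian hB)
  set lam := (isSymm_isHermitian hA).eigenvalues with hlam
  set mu := (isSymm_isHermitian hB).eigenvalues with hmu
  set W := Uᵀ * V with hW
  have hWWt : W * Wᵀ = 1 := by
    rw [hW, Matrix.transpose_mul, Matrix.transpose_transpose]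
    calc Uᵀ * V * (Vᵀ * U) = Uᵀ * (V * Vᵀ) * U := by simp [Matrix.mul_assoc]
    _ = 1 := by rw [hV1, Matrix.mul_one, hU2]
  have hWtW : Wᵀ * W = 1 := by
    rw [hW, Matrix.transpose_mul, Matrix.transpose_transpose]
    calc Vᵀ * U * (Uᵀ * V) = Vᵀ * (U * Uᵀ) * V := by simp [Matrix.mul_assoc]
    _ = 1 := by rw [hU1, Matrix.mul_one, hV2]
  have hWrow : ∀ i, ∑ j, (W i j)^2 = 1 := fun i => by
    have := row_sq_sum hWWt i
    simpa [sq] using this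
  have hWcol : ∀ j, ∑ i, (W i j)^2 = 1 := fun j => by
    have h' : Wᵀ * Wᵀᵀ = 1 := by rwa [Matrix.transpose_transpose]
    have := row_sq_sum h' j
    simpa [sq, Matrix.transpose_apply] using this
  -- the four traces
  have htAB : Matrix.trace (A * exp B) = ∑ i, ∑ j, lam i * Real.exp (mu j) * (W i j)^2 := by
    rw [show A * exp B = (U * Matrix.diagonal lam * Uᵀ) * (V * Matrix.diagonal (fun j => Real.exp (mu j)) * Vᵀ) from by rw [← hAspec, ← hBexp]]
    exact trace_conj_pair U V lam _
  have htBA : Matrix.trace (B * exp A) = ∑ i, ∑ j, mu i * Real.exp (lam j) * ((Vᵀ * U) i j)^2 := by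
    rw [show B * exp A = (V * Matrix.diagonal mu * Vᵀ) * (U * Matrix.diagonal (fun j => Real.exp (lam j)) * Uᵀ) from by rw [← hBspec, ← hAexp]]
    exact trace_conj_pair V U mu _
  have htAA : Matrix.trace (A * exp A) = ∑ i, lam i * Real.exp (lam i) := by
    rw [show A * exp A = (U * Matrix.diagonal lam * Uᵀ) * (U * Matrix.diagonal (fun j => Real.exp (lam j)) * Uᵀ) from by rw [← hAspec, ← hAexp]]
    rw [trace_conj_pair, hU2]
    simp [Matrix.one_apply, apply_ite (fun t : ℝ => t^2)]
  have htBB : Matrix.trace (B * exp B) = ∑ i, mu i * Real.exp (mu i) := by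
    rw [show B * exp B = (V * Matrix.diagonal mu * Vᵀ) * (V * Matrix.diagonal (fun j => Real.exp (mu j)) * Vᵀ) from by rw [← hBspec, ← hBexp]]
    rw [trace_conj_pair, hV2]
    simp [Matrix.one_apply, apply_ite (fun t : ℝ => t^2)]
  -- expand trace of the product
  have hexpand : Matrix.trace ((A - B) * (exp A - exp B)) =
      Matrix.trace (A * exp A) - Matrix.trace (A * exp B)
      - Matrix.trace (B * exp A) + Matrix.trace (B * exp B) := by
    rw [Matrix.sub_mul, Matrix.mul_sub, Matrix.mul_sub, Matrix.trace_sub, Matrix.trace_sub,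
      Matrix.trace_sub]
    ring
  -- the key sum
  have hS : ∑ i, ∑ j, (W i j)^2 * ((lam i - mu j) * (Real.exp (lam i) - Real.exp (mu j))) = 0 := by
    have e1 : ∑ i, ∑ j, (W i j)^2 * (lam i * Real.exp (lam i)) = ∑ i, lam i * Real.exp (lam i) := by
      refine Finset.sum_congr rfl fun i _ => ?_
      rw [← Finset.sum_mul, hWrow i, one_mul]
    have e4 : ∑ i, ∑ j, (W i j)^2 * (mu j * Real.exp (mu j)) = ∑ j, mu j * Real.exp (mu j) := by
      rw [Finset.sum_comm]
      refine Finset.sum_congr rfl fun j _ => ?_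
      rw [← Finset.sum_mul, hWcol j, one_mul]
    have hVtU : Vᵀ * U = Wᵀ := by rw [hW, Matrix.transpose_mul, Matrix.transpose_transpose]
    have e3 : ∑ i, ∑ j, (W i j)^2 * (mu j * Real.exp (lam i)) =
        ∑ i, ∑ j, mu i * Real.exp (lam j) * ((Vᵀ * U) i j)^2 := by
      rw [hVtU, Finset.sum_comm]
      refine Finset.sum_congr rfl fun a _ => Finset.sum_congr rfl fun b _ => ?_
      rw [Matrix.transpose_apply]
      ring
    calc ∑ i, ∑ j, (W i j)^2 * ((lam i - mu j) * (Real.exp (lam i) - Real.exp (mu j)))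
        = ∑ i, ∑ j, ((W i j)^2 * (lam i * Real.exp (lam i))
            - (W i j)^2 * (lam i * Real.exp (mu j))
            - (W i j)^2 * (mu j * Real.exp (lam i))
            + (W i j)^2 * (mu j * Real.exp (mu j))) := by
          exact Finset.sum_congr rfl fun i _ => Finset.sum_congr rfl fun j _ => by ring
      _ = (∑ i, ∑ j, (W i j)^2 * (lam i * Real.exp (lam i)))
            - (∑ i, ∑ j, (W i j)^2 * (lam i * Real.exp (mu j)))
            - (∑ i, ∑ j, (W i j)^2 * (mu j * Real.exp (lam i)))
            + (∑ i, ∑ j, (W i j)^2 * (mu j * Real.exp (mu j))) := by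
          simp [Finset.sum_add_distrib, Finset.sum_sub_distrib]
      _ = Matrix.trace (A * exp A) - Matrix.trace (A * exp B)
            - Matrix.trace (B * exp A) + Matrix.trace (B * exp B) := by
          rw [e1, e4, e3, htAA, htAB, htBA, htBB]
          congr 2
          · congr 1
            exact Finset.sum_congr rfl fun i _ => Finset.sum_congr rfl fun j _ => by ring
      _ = 0 := by rw [← hexpand, h]
  -- each term vanishes
  have hterm : ∀ i j, (W i j)^2 * ((lam i - mu j) * (Real.exp (lam i) - Real.exp (mu j))) = 0 := by
    have hnn : ∀ i ∈ Finset.univ, (0:ℝ) ≤ ∑ j, (W i j)^2 * ((lam i - mu j) * (Real.exp (lam i) - Real.exp (mu j))) :=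
      fun i _ => Finset.sum_nonneg fun j _ => mul_nonneg (sq_nonneg _) (expdiff_nonneg _ _)
    intro i j
    have hrow := (Finset.sum_eq_zero_iff_of_nonneg hnn).mp hS i (Finset.mem_univ i)
    have hnn2 : ∀ j ∈ Finset.univ, (0:ℝ) ≤ (W i j)^2 * ((lam i - mu j) * (Real.exp (lam i) - Real.exp (mu j))) :=
      fun j _ => mul_nonneg (sq_nonneg _) (expdiff_nonneg _ _)
    exact (Finset.sum_eq_zero_iff_of_nonneg hnn2).mp hrow j (Finset.mem_univ j)
  -- D W = W E
  have hDW : Matrix.diagonal lam * W = W * Matrix.diagonal mu := by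
    ext i j
    rw [Matrix.diagonal_mul, Matrix.mul_diagonal]
    rcases eq_or_ne (W i j) 0 with hw | hw
    · rw [hw]; ring
    · have := hterm i j
      rcases mul_eq_zero.mp this with h' | h'
      · exact absurd (pow_eq_zero_iff (by norm_num)|>.mp h') hw
      · rw [eq_of_expdiff_zero h']; ring
  -- conclude A = B
  have hAV : A * V = V * Matrix.diagonal mu := by
    calc A * V = U * Matrix.diagonal lam * (Uᵀ * V) := by rw [hAspec]; simp [Matrix.mul_assoc]
    _ = U * (Matrix.diagonal lam * W) := by rw [hW]; simp [Matrix.mul_assoc]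
    _ = U * (W * Matrix.diagonal mu) := by rw [hDW]
    _ = (U * (Uᵀ * V)) * Matrix.diagonal mu := by rw [hW]; simp [Matrix.mul_assoc]
    _ = V * Matrix.diagonal mu := by rw [← Matrix.mul_assoc, hU1, Matrix.one_mul]
  have hBV : B * V = V * Matrix.diagonal mu := by
    calc B * V = V * Matrix.diagonal mu * (Vᵀ * V) := by rw [hBspec]; simp [Matrix.mul_assoc]
    _ = V * Matrix.diagonal mu := by rw [hV2, Matrix.mul_one]
  calc A = A * (V * Vᵀ) := by rw [hV1, Matrix.mul_one]
  _ = (A * V) * Vᵀ := by rw [Matrix.mul_assoc]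
  _ = (B * V) * Vᵀ := by rw [hAV, hBV]
  _ = B * (V * Vᵀ) := by rw [Matrix.mul_assoc]
  _ = B := by rw [hV1, Matrix.mul_one]

lemma trace_mul_std (X : Matrix (Fin m) (Fin m) ℝ) (i : Fin m) :
    Matrix.trace (X * Matrix.single i i 1) = X i i := by
  classical
  simp [Matrix.trace, Matrix.diag, Matrix.mul_apply, Matrix.single, ite_and,
    Finset.sum_ite_eq, Finset.sum_ite_eq']

lemma trace_exp_hasDerivAt (A D : Matrix (Fin m) (Fin m) ℝ) :
    HasDerivAt (fun t : ℝ => Matrix.trace (exp (A + t • D)))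
      (Matrix.trace (exp A * D)) 0 := by
  classical
  letI : SeminormedRing (Matrix (Fin m) (Fin m) ℝ) := Matrix.linftyOpSemiNormedRing
  letI : NormedRing (Matrix (Fin m) (Fin m) ℝ) := Matrix.linftyOpNormedRing
  letI : NormedAlgebra ℝ (Matrix (Fin m) (Fin m) ℝ) := Matrix.linftyOpNormedAlgebra
  set M : ℝ → Matrix (Fin m) (Fin m) ℝ := fun t => A + t • D with hM
  have hMd : ∀ t : ℝ, HasDerivAt M D t := by
    intro t
    have := ((hasDerivAt_id t).smul_const D).const_add A
    rw [one_smul] at this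
    exact this
  -- trace as a continuous linear map
  let T : Matrix (Fin m) (Fin m) ℝ →L[ℝ] ℝ :=
    LinearMap.toContinuousLinearMap (Matrix.traceLinearMap (Fin m) ℝ ℝ)
  have hT : ∀ X, T X = Matrix.trace X := fun X => rfl
  -- derivative of powers
  have hpow : ∀ (n : ℕ) (t : ℝ), HasDerivAt (fun s => M s ^ n)
      (∑ k ∈ Finset.range n, M t ^ k * D * M t ^ (n - 1 - k)) t := by
    intro n
    induction n with
    | zero => intro t; simp only [pow_zero, Finset.range_zero, Finset.sum_empty]; exact hasDerivAt_const t (1 : Matrix (Fin m) (Fin m) ℝ)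
    | succ n ih =>
      intro t
      have h1 := (ih t).mul (hMd t)
      have h2 : (∑ k ∈ Finset.range n, M t ^ k * D * M t ^ (n - 1 - k)) * M t + M t ^ n * D
          = ∑ k ∈ Finset.range (n + 1), M t ^ k * D * M t ^ (n + 1 - 1 - k) := by
        rw [Finset.sum_range_succ]
        congr 1
        · rw [Finset.sum_mul]
          refine Finset.sum_congr rfl fun k hk => ?_
          have hk' : k < n := Finset.mem_range.mp hk
          rw [Matrix.mul_assoc, ← pow_succ]
          congr 2
          omega
        · simp [Nat.sub_self]
      have h3 : ∀ s : ℝ, M s ^ (n + 1) = M s ^ n * M s := fun s => pow_succ _ _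
      simp only [h3]
      exact h2 ▸ h1
  have hptrace : ∀ (n : ℕ) (t : ℝ), HasDerivAt (fun s => Matrix.trace (M s ^ n))
      ((n : ℝ) * Matrix.trace (M t ^ (n - 1) * D)) t := by
    intro n t
    have := (T.hasFDerivAt).comp_hasDerivAt t (hpow n t)
    have heq : T (∑ k ∈ Finset.range n, M t ^ k * D * M t ^ (n - 1 - k))
        = (n : ℝ) * Matrix.trace (M t ^ (n - 1) * D) := by
      rw [map_sum]
      have hterm : ∀ k ∈ Finset.range n,
          T (M t ^ k * D * M t ^ (n - 1 - k)) = Matrix.trace (M t ^ (n - 1) * D) := by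
        intro k hk
        rw [hT, Matrix.trace_mul_comm, ← Matrix.mul_assoc, ← pow_add]
        congr 3
        have := Finset.mem_range.mp hk
        omega
      rw [Finset.sum_congr rfl hterm, Finset.sum_const, Finset.card_range, nsmul_eq_mul]
    exact heq ▸ this
  -- the scalar series
  set g : ℕ → ℝ → ℝ := fun n t => ((n ! : ℝ)⁻¹) * Matrix.trace (M t ^ n) with hgdef
  set g' : ℕ → ℝ → ℝ :=
    fun n t => ((n ! : ℝ)⁻¹) * ((n : ℝ) * Matrix.trace (M t ^ (n - 1) * D)) with hg'def
  have hgd : ∀ (n : ℕ) (t : ℝ), HasDerivAt (g n) (g' n t) t :=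
    fun n t => (hptrace n t).const_mul _
  set C : ℝ := @Norm.norm _ ContinuousLinearMap.hasOpNorm T with hCdef
  have hC0 : 0 ≤ C := ContinuousLinearMap.opNorm_nonneg T
  set R : ℝ := ‖A‖ + ‖D‖ with hRdef
  have hR0 : 0 ≤ R := by positivity
  have hMbound : ∀ y : ℝ, y ∈ Metric.ball (0:ℝ) 1 → ‖M y‖ ≤ R := by
    intro y hy
    have hy1 : |y| ≤ 1 := le_of_lt (by simpa [Real.dist_eq] using hy)
    calc ‖A + y • D‖ ≤ ‖A‖ + ‖y • D‖ := norm_add_le _ _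
    _ = ‖A‖ + |y| * ‖D‖ := by rw [norm_smul, Real.norm_eq_abs]
    _ ≤ ‖A‖ + 1 * ‖D‖ := by gcongr
    _ = R := by rw [hRdef]; ring
  have hXpow : ∀ (X : Matrix (Fin m) (Fin m) ℝ) (k : ℕ), ‖X ^ k * D‖ ≤ ‖X‖ ^ k * ‖D‖ := by
    intro X k
    induction k with
    | zero => simp
    | succ k ih =>
      calc ‖X ^ (k+1) * D‖ = ‖X * (X ^ k * D)‖ := by rw [pow_succ', Matrix.mul_assoc]
      _ ≤ ‖X‖ * ‖X ^ k * D‖ := norm_mul_le _ _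
      _ ≤ ‖X‖ * (‖X‖ ^ k * ‖D‖) := by gcongr
      _ = ‖X‖ ^ (k+1) * ‖D‖ := by ring
  set u : ℕ → ℝ := fun n => match n with
    | 0 => 0
    | (k+1) => ((k ! : ℝ)⁻¹) * (C * (R ^ k * ‖D‖)) with hudef
  have hfact : ∀ k : ℕ, (((k+1)! : ℕ) : ℝ)⁻¹ * ((k : ℝ) + 1) = ((k ! : ℕ) : ℝ)⁻¹ := by
    intro k
    have h1 : (((k+1)! : ℕ) : ℝ) = ((k : ℝ) + 1) * ((k ! : ℕ) : ℝ) := by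
      rw [Nat.factorial_succ]; push_cast; ring
    have h2 : ((k : ℝ) + 1) ≠ 0 := by positivity
    have h3 : ((k ! : ℕ) : ℝ) ≠ 0 := by
      exact_mod_cast Nat.factorial_ne_zero k
    field_simp [h1]
    exact h1.symm
  have hu : Summable u := by
    have h1 : Summable (fun k : ℕ => ((k ! : ℝ)⁻¹) * (C * (R ^ k * ‖D‖))) := by
      have h2 := (Real.summable_pow_div_factorial R).mul_right (C * ‖D‖)
      refine h2.congr fun k => ?_
      rw [div_eq_mul_inv]; ring
    exact (summable_nat_add_iff 1).mp (h1.congr fun k => rfl)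
  have hbound : ∀ (n : ℕ) (y : ℝ), y ∈ Metric.ball (0:ℝ) 1 → ‖g' n y‖ ≤ u n := by
    intro n y hy
    match n with
    | 0 => simp [hg'def, hudef]
    | (k+1) =>
      have htr : |Matrix.trace (M y ^ k * D)| ≤ C * (R ^ k * ‖D‖) := by
        calc |Matrix.trace (M y ^ k * D)| = ‖T (M y ^ k * D)‖ := by
              rw [hT, Real.norm_eq_abs]
        _ ≤ C * ‖M y ^ k * D‖ := T.le_opNorm _
        _ ≤ C * (‖M y‖ ^ k * ‖D‖) := by
              have := hXpow (M y) k
              gcongr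
        _ ≤ C * (R ^ k * ‖D‖) := by
              have h1 : ‖M y‖ ^ k ≤ R ^ k := pow_le_pow_left₀ (norm_nonneg _) (hMbound y hy) k
              gcongr
      have hstep : ‖g' (k+1) y‖ ≤ (((k+1)! : ℕ) : ℝ)⁻¹ * (((k : ℝ) + 1) * (C * (R ^ k * ‖D‖))) := by
        simp only [hg'def, Real.norm_eq_abs, abs_mul, Nat.add_sub_cancel]
        have e1 : |(((k+1)! : ℕ) : ℝ)⁻¹| = (((k+1)! : ℕ) : ℝ)⁻¹ := abs_of_nonneg (by positivity)
        have e2 : |((k+1 : ℕ) : ℝ)| = ((k : ℝ) + 1) := by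
          rw [abs_of_nonneg (by positivity)]; push_cast; ring
        rw [e1, e2]
        gcongr
      calc ‖g' (k+1) y‖ ≤ (((k+1)! : ℕ) : ℝ)⁻¹ * (((k : ℝ) + 1) * (C * (R ^ k * ‖D‖))) := hstep
      _ = ((((k+1)! : ℕ) : ℝ)⁻¹ * ((k : ℝ) + 1)) * (C * (R ^ k * ‖D‖)) := by ring
      _ = ((k ! : ℕ) : ℝ)⁻¹ * (C * (R ^ k * ‖D‖)) := by rw [hfact]
      _ = u (k+1) := rfl
  have hmem0 : (0:ℝ) ∈ Metric.ball (0:ℝ) 1 := Metric.mem_ball_self one_pos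
  have hg0 : Summable fun n => g n 0 := by
    have hs := NormedSpace.expSeries_summable' (𝕂 := ℝ) (M 0)
    have h2 := hs.map T.toLinearMap.toAddMonoidHom T.continuous
    refine h2.congr fun n => ?_
    show T ((n !⁻¹ : ℝ) • M 0 ^ n) = g n 0
    rw [_root_.map_smul, smul_eq_mul, hT]
  have hderiv := hasDerivAt_tsum_of_isPreconnected hu Metric.isOpen_ball
    (convex_ball (0:ℝ) 1).isPreconnected (fun n y _ => hgd n y) hbound hmem0 hg0 hmem0
  have hfun : (fun z : ℝ => ∑' n, g n z) = fun t => Matrix.trace (exp (A + t • D)) := by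
    funext t
    have hsumm := NormedSpace.expSeries_summable' (𝕂 := ℝ) (M t)
    calc ∑' n, g n t = ∑' n, T ((n !⁻¹ : ℝ) • M t ^ n) := by
          refine tsum_congr fun n => ?_
          rw [_root_.map_smul, smul_eq_mul, hT]
    _ = T (∑' n, (n !⁻¹ : ℝ) • M t ^ n) := (T.map_tsum hsumm).symm
    _ = Matrix.trace (exp (A + t • D)) := by rw [hT, exp_eq_tsum ℝ]
  have hsum' : Summable fun n => g' n 0 :=
    Summable.of_norm_bounded hu fun n => hbound n 0 hmem0
  have hA0 : M 0 = A := by simp [hM]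
  have hsummAD : Summable fun k : ℕ => (k !⁻¹ : ℝ) • (A ^ k * D) := by
    have hs := (NormedSpace.expSeries_summable' (𝕂 := ℝ) A).mul_right D
    refine hs.congr fun k => ?_
    rw [smul_mul_assoc]
  have hval : ∑' n, g' n 0 = Matrix.trace (exp A * D) := by
    rw [Summable.tsum_eq_zero_add hsum']
    have h0 : g' 0 0 = 0 := by simp [hg'def]
    rw [h0, zero_add]
    calc ∑' k, g' (k+1) 0 = ∑' k, ((k ! : ℕ) : ℝ)⁻¹ * Matrix.trace (A ^ k * D) := by
          refine tsum_congr fun k => ?_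
          show (((k+1)! : ℕ) : ℝ)⁻¹ * (((k+1 : ℕ) : ℝ) * Matrix.trace (M 0 ^ (k + 1 - 1) * D)) = _
          rw [hA0, Nat.add_sub_cancel]
          have : ((k+1 : ℕ) : ℝ) = (k : ℝ) + 1 := by push_cast; ring
          rw [this, ← mul_assoc, hfact]
    _ = ∑' k, T ((k !⁻¹ : ℝ) • (A ^ k * D)) := by
          refine tsum_congr fun k => ?_
          rw [_root_.map_smul, smul_eq_mul, hT]
    _ = T (∑' k, (k !⁻¹ : ℝ) • (A ^ k * D)) := (T.map_tsum hsummAD).symm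
    _ = T ((∑' k, (k !⁻¹ : ℝ) • A ^ k) * D) := by
          congr 1
          refine Eq.trans ?_ (Summable.tsum_mul_right D (NormedSpace.expSeries_summable' (𝕂 := ℝ) A))
          exact tsum_congr fun k => (smul_mul_assoc _ _ _).symm
    _ = Matrix.trace (exp A * D) := by rw [hT, exp_eq_tsum ℝ]
  rw [hfun, hval] at hderiv
  exact hderiv

/-- diagonal adjustment -/
def adjust (G : Matrix (Fin m) (Fin m) ℝ) (x : Fin m → ℝ) : Matrix (Fin m) (Fin m) ℝ :=
  Matrix.of fun i j => if i = j then x i else G i j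

lemma adjust_isSymm {G : Matrix (Fin m) (Fin m) ℝ} (hG : G.IsSymm) (x : Fin m → ℝ) :
    (adjust G x).IsSymm := by
  ext i j
  simp only [Matrix.transpose_apply, adjust, Matrix.of_apply]
  rcases eq_or_ne i j with h | h
  · subst h; rfl
  · rw [if_neg h, if_neg (Ne.symm h), hG.apply]

lemma adjust_diag (G : Matrix (Fin m) (Fin m) ℝ) (x : Fin m → ℝ) (i : Fin m) :
    adjust G x i i = x i := by simp [adjust]

lemma adjust_add_single (G : Matrix (Fin m) (Fin m) ℝ) (x : Fin m → ℝ) (i : Fin m) (t : ℝ) :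
    adjust G (x + t • (Pi.single i 1 : Fin m → ℝ)) = adjust G x + t • Matrix.single i i 1 := by
  ext a b
  simp only [adjust, Matrix.of_apply, Matrix.add_apply, Matrix.smul_apply,
    Matrix.single, Pi.add_apply, Pi.smul_apply, Pi.single_apply, smul_eq_mul,
    Matrix.of_apply]
  rcases eq_or_ne a b with h | h
  · subst h
    rcases eq_or_ne i a with h2 | h2
    · subst h2; simp
    · simp [Ne.symm h2, h2]
  · rw [if_neg h, if_neg h]
    have : ¬(i = a ∧ i = b) := by rintro ⟨rfl, rfl⟩; exact h rfl
    simp [this]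

lemma adjust_sub (G : Matrix (Fin m) (Fin m) ℝ) (x y : Fin m → ℝ) :
    adjust G x - adjust G y = Matrix.diagonal (x - y) := by
  ext a b
  simp only [adjust, Matrix.sub_apply, Matrix.of_apply, Matrix.diagonal_apply, Pi.sub_apply]
  rcases eq_or_ne a b with h | h
  · subst h; simp
  · simp [h]

lemma continuous_trace_exp_adjust (G : Matrix (Fin m) (Fin m) ℝ) :
    Continuous fun x : Fin m → ℝ => Matrix.trace (exp (adjust G x)) := by
  letI : SeminormedRing (Matrix (Fin m) (Fin m) ℝ) := Matrix.linftyOpSemiNormedRing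
  letI : NormedRing (Matrix (Fin m) (Fin m) ℝ) := Matrix.linftyOpNormedRing
  letI : NormedAlgebra ℝ (Matrix (Fin m) (Fin m) ℝ) := Matrix.linftyOpNormedAlgebra
  letI : NormedAlgebra ℚ (Matrix (Fin m) (Fin m) ℝ) := Matrix.linftyOpNormedAlgebra
  have h1 : Continuous fun x : Fin m → ℝ => adjust G x := by
    apply continuous_matrix
    intro i j
    rcases eq_or_ne i j with h | h
    · subst h; simpa [adjust] using continuous_apply i
    · simpa [adjust, h] using continuous_const
  have h2 : Continuous (exp : Matrix (Fin m) (Fin m) ℝ → Matrix (Fin m) (Fin m) ℝ) :=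
    NormedSpace.exp_continuous
  have h3 : Continuous (Matrix.trace : Matrix (Fin m) (Fin m) ℝ → ℝ) :=
    continuous_id.matrix_trace
  exact h3.comp (h2.comp h1)

lemma abs_le_exp_sub (a : ℝ) : |a| ≤ Real.exp a - a := by
  rcases le_total 0 a with h | h
  · rw [abs_of_nonneg h]
    have h1 := Real.add_one_le_exp (a - 1)
    have h2 : Real.exp a = Real.exp (a - 1) * Real.exp 1 := by
      rw [← Real.exp_add]; ring_nf
    nlinarith [Real.exp_one_gt_d9, Real.exp_pos (a - 1)]
  · rw [abs_of_nonpos h]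
    have := (Real.exp_pos a).le
    linarith

lemma exists_unit_diag {G : Matrix (Fin m) (Fin m) ℝ} (hG : G.IsSymm) :
    ∃ x : Fin m → ℝ, ∀ i, exp (adjust G x) i i = 1 := by
  classical
  set f : (Fin m → ℝ) → ℝ := fun x => Matrix.trace (exp (adjust G x)) - ∑ i, x i with hf
  have hfc : Continuous f :=
    (continuous_trace_exp_adjust G).sub (continuous_finset_sum _ fun i _ => continuous_apply i)
  have htr : ∀ x : Fin m → ℝ, Matrix.trace (exp (adjust G x)) = ∑ i, exp (adjust G x) i i :=
    fun _ => rfl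
  have hlow : ∀ x : Fin m → ℝ, ‖x‖ ≤ f x := by
    intro x
    have h1 : ∀ i, Real.exp (x i) ≤ exp (adjust G x) i i := fun i => by
      have := real_exp_diag_le (adjust_isSymm hG x) i
      rwa [adjust_diag] at this
    have h3 : ∑ i, |x i| ≤ f x := by
      calc ∑ i, |x i| ≤ ∑ i, (Real.exp (x i) - x i) :=
            Finset.sum_le_sum fun i _ => abs_le_exp_sub (x i)
      _ = (∑ i, Real.exp (x i)) - ∑ i, x i := Finset.sum_sub_distrib _ _
      _ ≤ f x := by
            have h6 := Finset.sum_le_sum fun i (_ : i ∈ Finset.univ) => h1 i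
            have h7 : f x = Matrix.trace (exp (adjust G x)) - ∑ i, x i := rfl
            rw [h7, htr x]
            linarith
    calc ‖x‖ ≤ ∑ i, |x i| := by
          refine (pi_norm_le_iff_of_nonneg (Finset.sum_nonneg fun i _ => abs_nonneg _)).mpr ?_
          intro i
          rw [Real.norm_eq_abs]
          exact Finset.single_le_sum (fun j (_ : j ∈ Finset.univ) => abs_nonneg (x j))
            (Finset.mem_univ i)
    _ ≤ f x := h3
  -- minimize on a closed ball
  set Rad : ℝ := |f 0| + 1 with hRad
  have hball : (0 : Fin m → ℝ) ∈ Metric.closedBall (0 : Fin m → ℝ) Rad := by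
    simp [Metric.mem_closedBall]
    positivity
  obtain ⟨x₀, hx₀mem, hx₀min⟩ :=
    (isCompact_closedBall (0 : Fin m → ℝ) Rad).exists_isMinOn ⟨0, hball⟩ hfc.continuousOn
  have hglobal : ∀ y, f x₀ ≤ f y := by
    intro y
    by_cases hy : y ∈ Metric.closedBall (0 : Fin m → ℝ) Rad
    · exact hx₀min hy
    · have h1 : Rad < ‖y‖ := by
        have := hy
        rw [Metric.mem_closedBall, dist_zero_right, not_le] at this
        exact this
      have h2 : f x₀ ≤ f 0 := hx₀min hball
      have h4 := hlow y
      have h5 : f 0 ≤ |f 0| := le_abs_self _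
      linarith
  refine ⟨x₀, fun i => ?_⟩
  set E := Matrix.single i i (1:ℝ) with hE
  set ff : ℝ → ℝ := fun t => f (x₀ + t • (Pi.single i 1 : Fin m → ℝ)) with hff
  have h1 : ff = fun t => Matrix.trace (exp (adjust G x₀ + t • E)) - ((∑ j, x₀ j) + t) := by
    funext t
    rw [hff]
    simp only [hf]
    rw [adjust_add_single]
    congr 1
    simp [Finset.sum_add_distrib, Pi.single_apply, mul_ite, Finset.sum_ite_eq]
  have hD : HasDerivAt ff (exp (adjust G x₀) i i - 1) 0 := by
    rw [h1]
    have h2 := trace_exp_hasDerivAt (adjust G x₀) E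
    have h3 : HasDerivAt (fun t : ℝ => (∑ j, x₀ j) + t) 1 0 := by
      simpa using (hasDerivAt_id (0:ℝ)).const_add (∑ j, x₀ j)
    have h4 := h2.sub h3
    have h5 : Matrix.trace (exp (adjust G x₀) * E) = exp (adjust G x₀) i i :=
      trace_mul_std _ i
    rwa [h5] at h4
  have hloc : IsLocalMin ff 0 := by
    refine Filter.Eventually.of_forall fun t => ?_
    have hff0 : ff 0 = f x₀ := by rw [hff]; simp
    rw [hff0]
    exact hglobal _
  have hzero := hloc.hasDerivAt_eq_zero hD
  linarith [hzero]

/-- For a real symmetric matrix `G`, there exists a unique vector `x` such that replacing the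
diagonal of `G` by `x` and taking the matrix exponential yields a matrix with unit diagonal;
the resulting matrix is a correlation matrix (symmetric positive definite, unit diagonal). -/
theorem exists_unique_diagonal_adjustment
    {m : ℕ} (G : Matrix (Fin m) (Fin m) ℝ) (hG : G.IsSymm) :
    ∃ x : Fin m → ℝ,
      (∀ i, exp (Matrix.of fun i' j' => if i' = j' then x i' else G i' j') i i = 1)
      ∧ (exp (Matrix.of fun i' j' => if i' = j' then x i' else G i' j')).IsSymm
      ∧ (exp (Matrix.of fun i' j' => if i' = j' then x i' else G i' j')).PosDef
      ∧ ∀ y : Fin m → ℝ,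
          (∀ i, exp (Matrix.of fun i' j' => if i' = j' then y i' else G i' j') i i = 1)
          → y = x := by
  obtain ⟨x, hx⟩ := exists_unit_diag hG
  refine ⟨x, hx, Matrix.IsSymm.exp (adjust_isSymm hG x),
    exp_posDef (adjust_isSymm hG x), ?_⟩
  intro y hy
  have hy' : ∀ i, exp (adjust G y) i i = 1 := hy
  have hAB : adjust G y = adjust G x := by
    apply eq_of_trace_pair_zero (adjust_isSymm hG y) (adjust_isSymm hG x)
    rw [adjust_sub, trace_diag_mul]
    refine Finset.sum_eq_zero fun i _ => ?_
    rw [Matrix.sub_apply, hy' i, hx i]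
    ring
  funext i
  have h2 := congrFun (congrFun hAB i) i
  rwa [adjust_diag, adjust_diag] at h2
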